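/- In a finite MDP, for every strategy σ and initial distribution d0, the probability mass in the union E of all (maximal) end-components tends to 1: liminf as i → ∞ of M^σ_i(E) equals 1. -/

import Mathlib

open scoped BigOperators
open Classical Filter

/-- A finite Markov decision process with real transition probabilities. -/
structure MDP (Q A : Type) [Fintype Q] [Fintype A] where
  δ : Q → A → Q → ℝ
  δ_nonneg : ∀ q a q', 0 ≤ δ q a q'
  δ_sum : ∀ q a, ∑ q', δ q a q' = 1

namespace MDP

variable {Q A : Type} [Fintype Q] [Fintype A]

/-- `d` is a probability distribution. -/
def IsDist (d : Q → ℝ) : Prop := (∀ q, 0 ≤ d q) ∧ ∑ q, d q = 1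

/-- A (randomized, history-dependent) strategy maps a history (list of past
state-action pairs) and the current state to a distribution over actions. -/
def IsStrategy (σ : List (Q × A) → Q → A → ℝ) : Prop :=
  (∀ h q a, 0 ≤ σ h q a) ∧ ∀ h q, ∑ a, σ h q a = 1

/-- The probability of the finite path `qs` (with actions `as`) of length `i`,
under strategy `σ` from initial distribution `d0`. -/
noncomputable def pathProb (M : MDP Q A) (σ : List (Q × A) → Q → A → ℝ)
    (d0 : Q → ℝ) (i : ℕ) (qs : Fin (i + 1) → Q) (as : Fin i → A) : ℝ :=
  d0 (qs 0) * ∏ j : Fin i,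
    (σ (List.ofFn (fun k : Fin j.val =>
          (qs ⟨k.val, by have := k.isLt; have := j.isLt; omega⟩,
           as ⟨k.val, by have := k.isLt; have := j.isLt; omega⟩)))
        (qs j.castSucc) (as j))
      * M.δ (qs j.castSucc) (as j) (qs j.succ)

/-- The distribution over states after `i` steps (`M^σ_i`). -/
noncomputable def stepDist (M : MDP Q A) (σ : List (Q × A) → Q → A → ℝ)
    (d0 : Q → ℝ) (i : ℕ) (q : Q) : ℝ :=
  ∑ qs : Fin (i + 1) → Q, ∑ as : Fin i → A,
    if qs (Fin.last i) = q then M.pathProb σ d0 i qs as else 0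

/-- The probability mass that a (sub)distribution assigns to a set `T`. -/
noncomputable def mass (d : Q → ℝ) (T : Set Q) : ℝ := ∑ q, T.indicator d q

/-- The support of a (sub)distribution. -/
def supp {α : Type} (d : α → ℝ) : Set α := {q | 0 < d q}

/-- One-step sure predecessors of `Y`. -/
def Pre (M : MDP Q A) (Y : Set Q) : Set Q :=
  {q | ∃ a, ∀ q', 0 < M.δ q a q' → q' ∈ Y}

/-- Probability of reaching `T` within `i` steps. -/
noncomputable def reachProb (M : MDP Q A) (σ : List (Q × A) → Q → A → ℝ)
    (d0 : Q → ℝ) (T : Set Q) (i : ℕ) : ℝ :=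
  ∑ qs : Fin (i + 1) → Q, ∑ as : Fin i → A,
    if ∃ j, qs j ∈ T then M.pathProb σ d0 i qs as else 0

/-- `d0` is almost-sure winning for the reachability objective `◇T`:
some strategy reaches `T` with probability one. -/
def ASReach (M : MDP Q A) (d0 : Q → ℝ) (T : Set Q) : Prop :=
  ∃ σ, IsStrategy σ ∧ (⨆ i : ℕ, M.reachProb σ d0 T i) = 1

/-- `d0` is limit-sure eventually synchronizing in `T`. -/
def LimitSureEventually (M : MDP Q A) (d0 : Q → ℝ) (T : Set Q) : Prop :=
  ∀ ε > (0 : ℝ), ∃ σ, IsStrategy σ ∧ ∃ i, 1 - ε ≤ mass (M.stepDist σ d0 i) T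

/-- `d0` is almost-sure weakly synchronizing in `T`. -/
def ASWeakly (M : MDP Q A) (d0 : Q → ℝ) (T : Set Q) : Prop :=
  ∃ σ, IsStrategy σ ∧ ∀ ε > (0 : ℝ), {i : ℕ | 1 - ε ≤ mass (M.stepDist σ d0 i) T}.Infinite

/-- `d0` is almost-sure strongly synchronizing in `T`. -/
def ASStrongly (M : MDP Q A) (d0 : Q → ℝ) (T : Set Q) : Prop :=
  ∃ σ, IsStrategy σ ∧ ∀ ε > (0 : ℝ), ∃ N, ∀ i ≥ N, 1 - ε ≤ mass (M.stepDist σ d0 i) T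

/-- The uniform distribution on a set `S`. -/
noncomputable def uniformOn (S : Set Q) : Q → ℝ :=
  fun q => if q ∈ S then 1 / (S.ncard : ℝ) else 0

/-- The uniform strategy, playing all actions uniformly at random. -/
noncomputable def uniformStrategy (Q A : Type) [Fintype A] :
    List (Q × A) → Q → A → ℝ :=
  fun _ _ _ => 1 / (Fintype.card A : ℝ)

/-- Action `a` is allowed in `q` w.r.t. `S` if all its successors stay in `S`. -/
def Allowed (M : MDP Q A) (S : Set Q) (q : Q) (a : A) : Prop :=
  ∀ q', 0 < M.δ q a q' → q' ∈ S

/-- Edge relation within `S` given the allowed actions. -/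
def ECEdge (M : MDP Q A) (S : Set Q) (q q' : Q) : Prop :=
  q ∈ S ∧ q' ∈ S ∧ ∃ a, M.Allowed S q a ∧ 0 < M.δ q a q'

/-- `S` is an end-component: closed and strongly connected via allowed actions. -/
def IsEC (M : MDP Q A) (S : Set Q) : Prop :=
  (∀ q ∈ S, ∃ a, M.Allowed S q a) ∧
  ∀ q ∈ S, ∀ q' ∈ S, Relation.ReflTransGen (M.ECEdge S) q q'

/-- The union of all end-components. -/
def ECUnion (M : MDP Q A) : Set Q := ⋃₀ {S | M.IsEC S}

/-- Positive always synchronizing in `T`. -/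
def PosAlways (M : MDP Q A) (d0 : Q → ℝ) (T : Set Q) : Prop :=
  ∃ σ, IsStrategy σ ∧ ∀ i, 0 < mass (M.stepDist σ d0 i) T

/-- Positive eventually synchronizing in `T`. -/
def PosEvent (M : MDP Q A) (d0 : Q → ℝ) (T : Set Q) : Prop :=
  ∃ σ, IsStrategy σ ∧ ∃ i, 0 < mass (M.stepDist σ d0 i) T

/-- Positive weakly synchronizing in `T`. -/
def PosWeakly (M : MDP Q A) (d0 : Q → ℝ) (T : Set Q) : Prop :=
  ∃ σ, IsStrategy σ ∧ ∀ N, ∃ i ≥ N, 0 < mass (M.stepDist σ d0 i) T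

/-- Positive strongly synchronizing in `T`. -/
def PosStrongly (M : MDP Q A) (d0 : Q → ℝ) (T : Set Q) : Prop :=
  ∃ σ, IsStrategy σ ∧ ∃ N, ∀ i ≥ N, 0 < mass (M.stepDist σ d0 i) T

/-- Bounded always synchronizing in `T`. -/
def BndAlways (M : MDP Q A) (d0 : Q → ℝ) (T : Set Q) : Prop :=
  ∃ σ, IsStrategy σ ∧ ∃ ε > (0 : ℝ), ∀ i, ε < mass (M.stepDist σ d0 i) T

/-- Bounded eventually synchronizing in `T`. -/
def BndEvent (M : MDP Q A) (d0 : Q → ℝ) (T : Set Q) : Prop :=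
  ∃ σ, IsStrategy σ ∧ ∃ ε > (0 : ℝ), ∃ i, ε < mass (M.stepDist σ d0 i) T

/-- Bounded weakly synchronizing in `T`. -/
def BndWeakly (M : MDP Q A) (d0 : Q → ℝ) (T : Set Q) : Prop :=
  ∃ σ, IsStrategy σ ∧ ∃ ε > (0 : ℝ), ∀ N, ∃ i ≥ N, ε < mass (M.stepDist σ d0 i) T

/-- Bounded strongly synchronizing in `T`. -/
def BndStrongly (M : MDP Q A) (d0 : Q → ℝ) (T : Set Q) : Prop :=
  ∃ σ, IsStrategy σ ∧ ∃ ε > (0 : ℝ), ∃ N, ∀ i ≥ N, ε < mass (M.stepDist σ d0 i) T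

end MDP

namespace MDPAux

open MDP

variable {Q A : Type} [Fintype Q] [Fintype A]

/-- Value iteration for reaching target `x`. -/
noncomputable def vIt [Nonempty A] (M : MDP Q A) (x : Q) : ℕ → Q → ℝ
  | 0 => fun q => if q = x then 1 else 0
  | (K+1) => fun q => if q = x then 1 else
      Finset.univ.sup' Finset.univ_nonempty (fun a => ∑ q', M.δ q a q' * vIt M x K q')

variable [Nonempty A] (M : MDP Q A) (x : Q)

lemma vIt_nonneg : ∀ K q, 0 ≤ vIt M x K q := by
  intro K
  induction K with
  | zero => intro q; simp only [vIt]; split <;> norm_num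
  | succ K ih =>
    intro q
    simp only [vIt]
    split
    · norm_num
    · refine le_trans ?_ (Finset.le_sup' _ (Finset.mem_univ (Classical.arbitrary A)))
      exact Finset.sum_nonneg fun q' _ => mul_nonneg (M.δ_nonneg _ _ _) (ih q')

lemma vIt_le_one : ∀ K q, vIt M x K q ≤ 1 := by
  intro K
  induction K with
  | zero => intro q; simp only [vIt]; split <;> norm_num
  | succ K ih =>
    intro q
    simp only [vIt]
    split
    · norm_num
    · rw [Finset.sup'_le_iff]
      intro a _
      calc ∑ q', M.δ q a q' * vIt M x K q' ≤ ∑ q', M.δ q a q' * 1 := by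
            refine Finset.sum_le_sum fun q' _ => ?_
            exact mul_le_mul_of_nonneg_left (ih q') (M.δ_nonneg _ _ _)
        _ = 1 := by simp [M.δ_sum]

lemma vIt_x (K : ℕ) : vIt M x K x = 1 := by cases K <;> simp [vIt]

lemma vIt_mono (q : Q) : Monotone (fun K => vIt M x K q) := by
  have step : ∀ K, ∀ q, vIt M x K q ≤ vIt M x (K+1) q := by
    intro K
    induction K with
    | zero =>
      intro q
      by_cases h : q = x
      · simp [vIt, h]
      · simp only [vIt, if_neg h]
        refine le_trans ?_ (Finset.le_sup' _ (Finset.mem_univ (Classical.arbitrary A)))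
        exact Finset.sum_nonneg fun q' _ =>
          mul_nonneg (M.δ_nonneg _ _ _) (vIt_nonneg M x 0 q')
    | succ K ih =>
      intro q
      by_cases h : q = x
      · simp [vIt, h]
      · show vIt M x (K+1) q ≤ vIt M x (K+2) q
        simp only [vIt, if_neg h]
        rw [Finset.sup'_le_iff]
        intro a _
        refine le_trans ?_ (Finset.le_sup' _ (Finset.mem_univ a))
        exact Finset.sum_le_sum fun q' _ =>
          mul_le_mul_of_nonneg_left (ih q') (M.δ_nonneg _ _ _)
  exact monotone_nat_of_le_succ fun K => step K q

/-- The reachability value: supremum of value iteration. -/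
noncomputable def rval (q : Q) : ℝ := ⨆ K, vIt M x K q

lemma rval_bdd (q : Q) : BddAbove (Set.range fun K => vIt M x K q) :=
  ⟨1, by rintro y ⟨K, rfl⟩; exact vIt_le_one M x K q⟩

lemma vIt_le_rval (K : ℕ) (q : Q) : vIt M x K q ≤ rval M x q :=
  le_ciSup (rval_bdd M x q) K

lemma rval_le_one (q : Q) : rval M x q ≤ 1 :=
  ciSup_le fun K => vIt_le_one M x K q

lemma rval_nonneg (q : Q) : 0 ≤ rval M x q :=
  le_trans (vIt_nonneg M x 0 q) (vIt_le_rval M x 0 q)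

lemma rval_x : rval M x x = 1 := by
  refine le_antisymm (rval_le_one M x x) ?_
  rw [← vIt_x M x 0]
  exact vIt_le_rval M x 0 x

lemma tendsto_vIt (q : Q) :
    Filter.Tendsto (fun K => vIt M x K q) Filter.atTop (nhds (rval M x q)) :=
  tendsto_atTop_ciSup (vIt_mono M x q) (rval_bdd M x q)

lemma sum_rval_le_one (q : Q) (a : A) : ∑ q', M.δ q a q' * rval M x q' ≤ 1 := by
  calc ∑ q', M.δ q a q' * rval M x q' ≤ ∑ q', M.δ q a q' * 1 :=
        Finset.sum_le_sum fun q' _ =>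
          mul_le_mul_of_nonneg_left (rval_le_one M x q') (M.δ_nonneg _ _ _)
    _ = 1 := by simp [M.δ_sum]

lemma sum_rval_nonneg (q : Q) (a : A) : 0 ≤ ∑ q', M.δ q a q' * rval M x q' :=
  Finset.sum_nonneg fun q' _ => mul_nonneg (M.δ_nonneg _ _ _) (rval_nonneg M x q')

/-- Bellman inequality (≥ direction). -/
lemma sum_rval_le (q : Q) (hq : q ≠ x) (a : A) :
    ∑ q', M.δ q a q' * rval M x q' ≤ rval M x q := by
  have hlim : Filter.Tendsto (fun K => ∑ q', M.δ q a q' * vIt M x K q')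
      Filter.atTop (nhds (∑ q', M.δ q a q' * rval M x q')) := by
    exact tendsto_finset_sum _ fun q' _ => (tendsto_vIt M x q').const_mul _
  refine le_of_tendsto hlim (Filter.Eventually.of_forall fun K => ?_)
  calc ∑ q', M.δ q a q' * vIt M x K q'
      ≤ vIt M x (K+1) q := by
        simp only [vIt, if_neg hq]
        exact Finset.le_sup' (fun a => ∑ q', M.δ q a q' * vIt M x K q')
          (Finset.mem_univ a)
    _ ≤ rval M x q := vIt_le_rval M x _ q

/-- Bellman (≤ direction) at value-1 states. -/
lemma exists_opt (q : Q) (hq : q ≠ x) (h1 : rval M x q = 1) :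
    ∃ a, ∑ q', M.δ q a q' * rval M x q' = 1 := by
  have hub : rval M x q ≤ Finset.univ.sup' Finset.univ_nonempty
      (fun a => ∑ q', M.δ q a q' * rval M x q') := by
    refine ciSup_le fun K => ?_
    cases K with
    | zero =>
      simp only [vIt, if_neg hq]
      exact le_trans (sum_rval_nonneg M x q (Classical.arbitrary A))
        (Finset.le_sup' (fun a => ∑ q', M.δ q a q' * rval M x q')
          (Finset.mem_univ (Classical.arbitrary A)))
    | succ K =>
      simp only [vIt, if_neg hq]
      rw [Finset.sup'_le_iff]
      intro a _
      refine le_trans (Finset.sum_le_sum fun q' _ =>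
        mul_le_mul_of_nonneg_left (vIt_le_rval M x K q') (M.δ_nonneg _ _ _)) ?_
      exact Finset.le_sup' (fun a => ∑ q', M.δ q a q' * rval M x q')
        (Finset.mem_univ a)
  rw [h1] at hub
  rw [Finset.le_sup'_iff] at hub
  obtain ⟨a, -, ha⟩ := hub
  exact ⟨a, le_antisymm (sum_rval_le_one M x q a) ha⟩

/-- Optimal actions keep the value-1 set. -/
lemma opt_supp (q : Q) (a : A) (h : ∑ q', M.δ q a q' * rval M x q' = 1)
    (q' : Q) (hq' : 0 < M.δ q a q') : rval M x q' = 1 := by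
  have hzero : ∑ q'', M.δ q a q'' * (1 - rval M x q'') = 0 := by
    have := M.δ_sum q a
    simp only [mul_sub, Finset.sum_sub_distrib, mul_one, this, h, sub_self]
  have hall := (Finset.sum_eq_zero_iff_of_nonneg (fun q'' _ =>
    mul_nonneg (M.δ_nonneg _ _ _) (by linarith [rval_le_one M x q'']))).mp hzero
  have := hall q' (Finset.mem_univ q')
  rcases mul_eq_zero.mp this with h' | h'
  · exact absurd h' (ne_of_gt hq')
  · linarith

/-- Edges along optimal actions (for target `x`) within the value-1 region. -/
def optEdge (u v : Q) : Prop :=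
  u ≠ x ∧ rval M x u = 1 ∧ ∃ b, (∑ q', M.δ u b q' * rval M x q' = 1) ∧ 0 < M.δ u b v

/-- From every value-1 state, `x` is reachable along optimal edges. -/
lemma optReach (q0 : Q) (h1 : rval M x q0 = 1) (hq0 : q0 ≠ x) :
    Relation.ReflTransGen (optEdge M x) q0 x := by
  by_contra hcon
  set Gf : Finset Q := Finset.univ.filter
    (fun q => rval M x q = 1 ∧ q ≠ x ∧ ¬ Relation.ReflTransGen (optEdge M x) q x) with hGf
  have hq0G : q0 ∈ Gf := by
    simp only [hGf, Finset.mem_filter, Finset.mem_univ, true_and]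
    exact ⟨h1, hq0, hcon⟩
  -- a uniform bound β < 1 on suboptimal action values
  obtain ⟨β, hβ0, hβ1, hβ⟩ : ∃ β, 0 ≤ β ∧ β < 1 ∧
      ∀ q a, (∑ q', M.δ q a q' * rval M x q' < 1) →
        ∑ q', M.δ q a q' * rval M x q' ≤ β := by
    set B : Finset (Q × A) := Finset.univ.filter
      (fun p => ∑ q', M.δ p.1 p.2 q' * rval M x q' < 1) with hB
    rcases B.eq_empty_or_nonempty with hBe | hBn
    · refine ⟨0, le_refl 0, one_pos, fun q a h => absurd ?_ (by
        simp [hBe] : (q, a) ∉ B)⟩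
      simp [hB, h]
    · refine ⟨B.sup' hBn (fun p => ∑ q', M.δ p.1 p.2 q' * rval M x q'), ?_, ?_, ?_⟩
      · obtain ⟨p, hp⟩ := hBn
        exact le_trans (sum_rval_nonneg M x p.1 p.2)
          (Finset.le_sup' (fun p => ∑ q', M.δ p.1 p.2 q' * rval M x q') hp)
      · rw [Finset.sup'_lt_iff]
        intro p hp
        simpa [hB] using hp
      · intro q a h
        exact Finset.le_sup' (fun p => ∑ q', M.δ p.1 p.2 q' * rval M x q')
          (by simp [hB, h] : (q, a) ∈ B)
  -- optimal actions from G stay in G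
  have hGsupp : ∀ g ∈ Gf, ∀ b, (∑ q', M.δ g b q' * rval M x q' = 1) →
      ∀ v, 0 < M.δ g b v → v ∈ Gf := by
    intro g hg b hb v hv
    simp only [hGf, Finset.mem_filter, Finset.mem_univ, true_and] at hg ⊢
    obtain ⟨hg1, hgx, hgr⟩ := hg
    have hv1 : rval M x v = 1 := opt_supp M x g b hb v hv
    have hedge : optEdge M x g v := ⟨hgx, hg1, b, hb, hv⟩
    refine ⟨hv1, ?_, ?_⟩
    · rintro rfl
      exact hgr (Relation.ReflTransGen.single hedge)
    · intro hvr
      exact hgr (Relation.ReflTransGen.head hedge hvr)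
  -- value iteration is bounded by β on G
  have hInd : ∀ K, ∀ g ∈ Gf, vIt M x K g ≤ β := by
    intro K
    induction K with
    | zero =>
      intro g hg
      simp only [hGf, Finset.mem_filter, Finset.mem_univ, true_and] at hg
      simp only [vIt, if_neg hg.2.1]
      exact hβ0
    | succ K ih =>
      intro g hg
      have hgx : g ≠ x := by
        simp only [hGf, Finset.mem_filter, Finset.mem_univ, true_and] at hg
        exact hg.2.1
      simp only [vIt, if_neg hgx]
      rw [Finset.sup'_le_iff]
      intro b _
      rcases lt_or_eq_of_le (sum_rval_le_one M x g b) with hlt | heq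
      · calc ∑ q', M.δ g b q' * vIt M x K q'
            ≤ ∑ q', M.δ g b q' * rval M x q' :=
              Finset.sum_le_sum fun q' _ =>
                mul_le_mul_of_nonneg_left (vIt_le_rval M x K q') (M.δ_nonneg _ _ _)
          _ ≤ β := hβ g b hlt
      · calc ∑ q', M.δ g b q' * vIt M x K q'
            ≤ ∑ q', M.δ g b q' * β := by
              refine Finset.sum_le_sum fun q' _ => ?_
              rcases (M.δ_nonneg g b q').lt_or_eq with hpos | hzero
              · exact mul_le_mul_of_nonneg_left
                  (ih q' (hGsupp g hg b heq q' hpos)) (M.δ_nonneg _ _ _)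
              · rw [← hzero]; simp
          _ = β := by rw [← Finset.sum_mul, M.δ_sum, one_mul]
  have : rval M x q0 ≤ β := ciSup_le fun K => hInd K q0 hq0G
  rw [h1] at this
  linarith

/-- Key lemma: from a state outside every end-component, every action leaks
value. -/
lemma key_lt (hx : x ∉ M.ECUnion) (a : A) :
    ∑ q', M.δ x a q' * rval M x q' < 1 := by
  rcases lt_or_eq_of_le (sum_rval_le_one M x x a) with h | h
  · exact h
  exfalso
  apply hx
  -- build an end-component containing x
  set edge : Q → Q → Prop := fun u v => (u = x ∧ 0 < M.δ x a v) ∨ optEdge M x u v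
    with hedge
  set S : Set Q := {q | Relation.ReflTransGen edge x q} with hS
  have hxS : x ∈ S := Relation.ReflTransGen.refl
  have hS_extend : ∀ u v, Relation.ReflTransGen edge u v → u ∈ S → v ∈ S := by
    intro u v h hu
    induction h with
    | refl => exact hu
    | tail _ e ih => exact Relation.ReflTransGen.tail ih e
  have hval1 : ∀ v, v ∈ S → v = x ∨ rval M x v = 1 := by
    intro v hv
    induction hv with
    | refl => exact Or.inl rfl
    | tail _ e _ =>
      rcases e with ⟨_, hpos⟩ | ⟨_, _, b, hb, hpos⟩
      · exact Or.inr (opt_supp M x x a h _ hpos)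
      · exact Or.inr (opt_supp M x _ b hb _ hpos)
  -- a closing action for each state of S
  have hclose : ∀ q ∈ S, ∃ b, M.Allowed S q b := by
    intro q hq
    rcases hval1 q hq with rfl | h1
    · exact ⟨a, fun v hv => Relation.ReflTransGen.tail hxS (Or.inl ⟨rfl, hv⟩)⟩
    · by_cases hqx : q = x
      · subst hqx
        exact ⟨a, fun v hv => Relation.ReflTransGen.tail hxS (Or.inl ⟨rfl, hv⟩)⟩
      · obtain ⟨b, hb⟩ := exists_opt M x q hqx h1
        exact ⟨b, fun v hv =>
          Relation.ReflTransGen.tail hq (Or.inr ⟨hqx, h1, b, hb, hv⟩)⟩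
  -- edge-paths inside S are ECEdge-paths
  have hts : ∀ u v, Relation.ReflTransGen edge u v → u ∈ S →
      Relation.ReflTransGen (M.ECEdge S) u v := by
    intro u v hpath hu
    induction hpath with
    | refl => exact Relation.ReflTransGen.refl
    | @tail w v hw e ih =>
      have hwS : w ∈ S := hS_extend u w hw hu
      have hvS : v ∈ S := Relation.ReflTransGen.tail hwS e
      refine Relation.ReflTransGen.tail ih ?_
      rcases e with ⟨rfl, hpos⟩ | ⟨hwx, h1, b, hb, hpos⟩
      · exact ⟨hwS, hvS, a,
          fun v' hv' => Relation.ReflTransGen.tail hxS (Or.inl ⟨rfl, hv'⟩), hpos⟩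
      · exact ⟨hwS, hvS, b,
          fun v' hv' => Relation.ReflTransGen.tail hwS
            (Or.inr ⟨hwx, h1, b, hb, hv'⟩), hpos⟩
  refine Set.mem_sUnion.mpr ⟨S, ?_, hxS⟩
  constructor
  · exact hclose
  · intro q hq q' hq'
    have hqx : Relation.ReflTransGen (M.ECEdge S) q x := by
      rcases hval1 q hq with rfl | h1
      · exact Relation.ReflTransGen.refl
      · by_cases hqq : q = x
        · subst hqq; exact Relation.ReflTransGen.refl
        · have := optReach M x q h1 hqq
          exact hts q x (Relation.ReflTransGen.mono (p := edge) (fun u v huv => Or.inr huv) q x this) hq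
    exact hqx.trans (hts x q' hq' hxS)

section Path

variable (M : MDP Q A) (σ : List (Q × A) → Q → A → ℝ) (d0 : Q → ℝ)

lemma pathProb_nonneg (hσ : IsStrategy σ) (hd0 : ∀ q, 0 ≤ d0 q) (i : ℕ)
    (qs : Fin (i+1) → Q) (as : Fin i → A) : 0 ≤ M.pathProb σ d0 i qs as :=
  mul_nonneg (hd0 _) (Finset.prod_nonneg fun j _ =>
    mul_nonneg (hσ.1 _ _ _) (M.δ_nonneg _ _ _))

/-- Expected value of `g` at the end of an `i`-step path. -/
noncomputable def pexp (i : ℕ) (g : Q → ℝ) : ℝ :=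
  ∑ qs : Fin (i + 1) → Q, ∑ as : Fin i → A,
    M.pathProb σ d0 i qs as * g (qs (Fin.last i))

/-- snoc as an equivalence. -/
def snocEquiv (α : Type) (n : ℕ) : (Fin n → α) × α ≃ (Fin (n+1) → α) where
  toFun p := Fin.snoc p.1 p.2
  invFun f := (Fin.init f, f (Fin.last n))
  left_inv p := by
    obtain ⟨f, x⟩ := p
    simp
  right_inv f := Fin.snoc_init_self f

lemma pathProb_snoc (i : ℕ) (qs : Fin (i+1) → Q) (as : Fin i → A) (q' : Q) (a : A) :
    M.pathProb σ d0 (i+1) (Fin.snoc qs q') (Fin.snoc as a)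
      = M.pathProb σ d0 i qs as *
        (σ (List.ofFn (fun k : Fin i =>
              (qs ⟨k.val, k.isLt.trans (Nat.lt_succ_self i)⟩, as k)))
           (qs (Fin.last i)) a * M.δ (qs (Fin.last i)) a q') := by
  unfold pathProb
  rw [Fin.prod_univ_castSucc]
  have h0 : (Fin.snoc qs q' : Fin (i+2) → Q) 0 = qs 0 := by
    have : (0 : Fin (i+2)) = Fin.castSucc (0 : Fin (i+1)) := rfl
    rw [this, Fin.snoc_castSucc]
  have hterm : ∀ j : Fin i,
      (σ (List.ofFn (fun k : Fin (Fin.castSucc j).val =>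
            ((Fin.snoc qs q' : Fin (i+2) → Q) ⟨k.val, by have := k.isLt; have := j.isLt; omega⟩,
             (Fin.snoc as a : Fin (i+1) → A) ⟨k.val, by have := k.isLt; have := j.isLt; omega⟩)))
          ((Fin.snoc qs q' : Fin (i+2) → Q) (Fin.castSucc j).castSucc)
          ((Fin.snoc as a : Fin (i+1) → A) (Fin.castSucc j)))
        * M.δ ((Fin.snoc qs q' : Fin (i+2) → Q) (Fin.castSucc j).castSucc)
            ((Fin.snoc as a : Fin (i+1) → A) (Fin.castSucc j))
            ((Fin.snoc qs q' : Fin (i+2) → Q) (Fin.castSucc j).succ)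
      = (σ (List.ofFn (fun k : Fin j.val =>
            (qs ⟨k.val, by have := k.isLt; have := j.isLt; omega⟩,
             as ⟨k.val, by have := k.isLt; have := j.isLt; omega⟩)))
          (qs j.castSucc) (as j))
        * M.δ (qs j.castSucc) (as j) (qs j.succ) := by
    intro j
    have e1 : (Fin.snoc qs q' : Fin (i+2) → Q) (Fin.castSucc j).castSucc
        = qs j.castSucc := by simp
    have e2 : (Fin.snoc as a : Fin (i+1) → A) (Fin.castSucc j) = as j := by simp
    have e3 : (Fin.snoc qs q' : Fin (i+2) → Q) (Fin.castSucc j).succ = qs j.succ := by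
      rw [Fin.succ_castSucc, Fin.snoc_castSucc]
    have e4 : ∀ (k : Fin (Fin.castSucc j).val),
        ((Fin.snoc qs q' : Fin (i+2) → Q) ⟨k.val, by have := k.isLt; have := j.isLt; omega⟩,
         (Fin.snoc as a : Fin (i+1) → A) ⟨k.val, by have := k.isLt; have := j.isLt; omega⟩)
        = ((qs ⟨k.val, by have := k.isLt; have := j.isLt; omega⟩ : Q),
           (as ⟨k.val, by have := k.isLt; have := j.isLt; omega⟩ : A)) := by
      intro k
      have hk : k.val < i + 1 := by have := k.isLt; have := j.isLt; omega
      have hk2 : k.val < i := by have := k.isLt; have := j.isLt; omega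
      have hcA : (⟨k.val, by omega⟩ : Fin (i+2)) = Fin.castSucc ⟨k.val, hk⟩ := by
        apply Fin.ext; simp
      have hcB : (⟨k.val, by omega⟩ : Fin (i+1)) = Fin.castSucc ⟨k.val, hk2⟩ := by
        apply Fin.ext; simp
      have hA : (Fin.snoc qs q' : Fin (i+2) → Q) ⟨k.val, by omega⟩ = qs ⟨k.val, hk⟩ := by
        rw [hcA, Fin.snoc_castSucc]
      have hB : (Fin.snoc as a : Fin (i+1) → A) ⟨k.val, by omega⟩ = as ⟨k.val, hk2⟩ := by
        rw [hcB, Fin.snoc_castSucc]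
      rw [hA, hB]
    rw [e1, e2, e3]
    congr 2
    exact congrArg List.ofFn (funext e4)
  have hlast :
      (σ (List.ofFn (fun k : Fin (Fin.last i).val =>
            ((Fin.snoc qs q' : Fin (i+2) → Q) ⟨k.val, by have := k.isLt; have := (Fin.last i).isLt; omega⟩,
             (Fin.snoc as a : Fin (i+1) → A) ⟨k.val, by have := k.isLt; have := (Fin.last i).isLt; omega⟩)))
          ((Fin.snoc qs q' : Fin (i+2) → Q) (Fin.last i).castSucc)
          ((Fin.snoc as a : Fin (i+1) → A) (Fin.last i)))
        * M.δ ((Fin.snoc qs q' : Fin (i+2) → Q) (Fin.last i).castSucc)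
            ((Fin.snoc as a : Fin (i+1) → A) (Fin.last i))
            ((Fin.snoc qs q' : Fin (i+2) → Q) (Fin.last i).succ)
      = σ (List.ofFn (fun k : Fin i =>
            (qs ⟨k.val, k.isLt.trans (Nat.lt_succ_self i)⟩, as k)))
          (qs (Fin.last i)) a * M.δ (qs (Fin.last i)) a q' := by
    have f1 : (Fin.snoc qs q' : Fin (i+2) → Q) (Fin.last i).castSucc
        = qs (Fin.last i) := by simp
    have f2 : (Fin.snoc as a : Fin (i+1) → A) (Fin.last i) = a := by
      simpa using Fin.snoc_last (α := fun _ : Fin (i+1) => A) as a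
    have f3 : (Fin.snoc qs q' : Fin (i+2) → Q) (Fin.last i).succ = q' := by
      rw [Fin.succ_last]
      simpa using Fin.snoc_last (α := fun _ : Fin (i+2) => Q) qs q'
    have f4 : ∀ (k : Fin (Fin.last i).val),
        ((Fin.snoc qs q' : Fin (i+2) → Q) ⟨k.val, by have := k.isLt; have := (Fin.last i).isLt; omega⟩,
         (Fin.snoc as a : Fin (i+1) → A) ⟨k.val, by have := k.isLt; have := (Fin.last i).isLt; omega⟩)
        = ((qs ⟨k.val, k.isLt.trans (Nat.lt_succ_self i)⟩ : Q), (as k : A)) := by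
      intro k
      have hk : k.val < i + 1 := by have := k.isLt; omega
      have hk2 : k.val < i := k.isLt
      have hcA : (⟨k.val, by omega⟩ : Fin (i+2)) = Fin.castSucc ⟨k.val, hk⟩ := by
        apply Fin.ext; simp
      have hcB : (⟨k.val, by omega⟩ : Fin (i+1)) = Fin.castSucc ⟨k.val, hk2⟩ := by
        apply Fin.ext; simp
      have hA : (Fin.snoc qs q' : Fin (i+2) → Q) ⟨k.val, by omega⟩
          = qs ⟨k.val, hk⟩ := by rw [hcA, Fin.snoc_castSucc]
      have hB : (Fin.snoc as a : Fin (i+1) → A) ⟨k.val, by omega⟩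
          = as ⟨k.val, hk2⟩ := by rw [hcB, Fin.snoc_castSucc]
      rw [hA, hB]
      congr
    rw [f1, f2, f3]
    congr 3
    exact funext f4
  rw [h0, hlast, Finset.prod_congr rfl (fun j _ => hterm j)]
  ring

lemma pexp_succ (i : ℕ) (g : Q → ℝ) :
    pexp M σ d0 (i+1) g
      = ∑ qs : Fin (i+1) → Q, ∑ as : Fin i → A,
          M.pathProb σ d0 i qs as *
            ∑ a, σ (List.ofFn (fun k : Fin i =>
                (qs ⟨k.val, k.isLt.trans (Nat.lt_succ_self i)⟩, as k)))
              (qs (Fin.last i)) a *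
              ∑ q', M.δ (qs (Fin.last i)) a q' * g q' := by
  have h1 : pexp M σ d0 (i+1) g
      = ∑ p : (Fin (i+1) → Q) × Q, ∑ r : (Fin i → A) × A,
          M.pathProb σ d0 (i+1) (Fin.snoc p.1 p.2) (Fin.snoc r.1 r.2)
            * g ((Fin.snoc p.1 p.2 : Fin (i+2) → Q) (Fin.last (i+1))) := by
    rw [pexp]
    rw [← Equiv.sum_comp (snocEquiv Q (i+1))
      (fun qs => ∑ as : Fin (i+1) → A,
        M.pathProb σ d0 (i+1) qs as * g (qs (Fin.last (i+1))))]
    refine Finset.sum_congr rfl fun p _ => ?_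
    rw [← Equiv.sum_comp (snocEquiv A i)
      (fun as => M.pathProb σ d0 (i+1) ((snocEquiv Q (i+1)) p) as
        * g (((snocEquiv Q (i+1)) p) (Fin.last (i+1))))]
    rfl
  rw [h1, Fintype.sum_prod_type]
  refine Finset.sum_congr rfl fun qs _ => ?_
  rw [Finset.sum_comm]
  rw [Fintype.sum_prod_type]
  refine Finset.sum_congr rfl fun as _ => ?_
  rw [Finset.mul_sum]
  refine Finset.sum_congr rfl fun a _ => ?_
  have hpt : ∀ q' : Q,
      M.pathProb σ d0 (i+1) (Fin.snoc qs q') (Fin.snoc as a)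
        * g ((Fin.snoc qs q' : Fin (i+2) → Q) (Fin.last (i+1)))
      = M.pathProb σ d0 i qs as *
          (σ (List.ofFn (fun k : Fin i =>
              (qs ⟨k.val, k.isLt.trans (Nat.lt_succ_self i)⟩, as k)))
            (qs (Fin.last i)) a * (M.δ (qs (Fin.last i)) a q' * g q')) := by
    intro q'
    rw [pathProb_snoc]
    have hl : (Fin.snoc qs q' : Fin (i+2) → Q) (Fin.last (i+1)) = q' := by simp
    rw [hl]
    ring
  rw [Finset.sum_congr rfl fun q' _ => hpt q']
  rw [← Finset.mul_sum, ← Finset.mul_sum]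

lemma pexp_zero (g : Q → ℝ) : pexp M σ d0 0 g = ∑ q, d0 q * g q := by
  rw [pexp]
  rw [← Equiv.sum_comp (Equiv.funUnique (Fin 1) Q).symm
    (fun qs : Fin 1 → Q => ∑ as : Fin 0 → A,
      M.pathProb σ d0 0 qs as * g (qs (Fin.last 0)))]
  refine Finset.sum_congr rfl fun q _ => ?_
  rw [Fintype.sum_subsingleton _ (Fin.elim0 : Fin 0 → A)]
  simp [pathProb]

lemma pexp_one (hσ : IsStrategy σ) (hd0sum : ∑ q, d0 q = 1) :
    ∀ i, pexp M σ d0 i (fun _ => 1) = 1 := by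
  intro i
  induction i with
  | zero => simp [pexp_zero, hd0sum]
  | succ i ih =>
    rw [pexp_succ]
    have : ∀ (qs : Fin (i+1) → Q) (as : Fin i → A),
        (∑ a, σ (List.ofFn (fun k : Fin i =>
            (qs ⟨k.val, k.isLt.trans (Nat.lt_succ_self i)⟩, as k)))
          (qs (Fin.last i)) a *
          ∑ q', M.δ (qs (Fin.last i)) a q' * (1 : ℝ)) = 1 := by
      intro qs as
      have : ∀ a : A, (∑ q', M.δ (qs (Fin.last i)) a q' * (1:ℝ)) = 1 := by
        intro a; simp [M.δ_sum]
      simp only [this]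
      simp [hσ.2]
    calc (∑ qs : Fin (i+1) → Q, ∑ as : Fin i → A,
            M.pathProb σ d0 i qs as *
            ∑ a, σ (List.ofFn (fun k : Fin i =>
                (qs ⟨k.val, k.isLt.trans (Nat.lt_succ_self i)⟩, as k)))
              (qs (Fin.last i)) a *
              ∑ q', M.δ (qs (Fin.last i)) a q' * (1:ℝ))
        = ∑ qs : Fin (i+1) → Q, ∑ as : Fin i → A,
            M.pathProb σ d0 i qs as * 1 := by
          refine Finset.sum_congr rfl fun qs _ => Finset.sum_congr rfl fun as _ => ?_
          rw [this qs as]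
      _ = pexp M σ d0 i (fun _ => 1) := by rw [pexp]
      _ = 1 := ih

lemma mass_eq_pexp (T : Set Q) (i : ℕ) :
    mass (M.stepDist σ d0 i) T
      = pexp M σ d0 i (fun q => if q ∈ T then 1 else 0) := by
  have h1 : mass (M.stepDist σ d0 i) T
      = ∑ q, ∑ qs : Fin (i+1) → Q, ∑ as : Fin i → A,
          if q ∈ T then (if qs (Fin.last i) = q then M.pathProb σ d0 i qs as else 0)
          else 0 := by
    rw [mass]
    refine Finset.sum_congr rfl fun q _ => ?_
    rw [Set.indicator]
    split_ifs with h
    · rw [stepDist]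
    · simp [h]
  rw [h1, Finset.sum_comm]
  rw [pexp]
  refine Finset.sum_congr rfl fun qs _ => ?_
  rw [Finset.sum_comm]
  refine Finset.sum_congr rfl fun as _ => ?_
  have : ∀ q : Q, (if q ∈ T then (if qs (Fin.last i) = q then M.pathProb σ d0 i qs as else 0) else 0)
      = if qs (Fin.last i) = q then (if q ∈ T then M.pathProb σ d0 i qs as else 0) else 0 := by
    intro q; split_ifs <;> rfl
  rw [Finset.sum_congr rfl fun q _ => this q]
  rw [Finset.sum_ite_eq]
  simp only [Finset.mem_univ, if_true]
  split_ifs with h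
  · rw [mul_one]
  · rw [mul_zero]

lemma pexp_sub_smul (i : ℕ) (f χ : Q → ℝ) (γ : ℝ) :
    pexp M σ d0 i (fun q => f q - γ * χ q)
      = pexp M σ d0 i f - γ * pexp M σ d0 i χ := by
  simp only [pexp, mul_sub, Finset.sum_sub_distrib, Finset.mul_sum, mul_left_comm]

lemma pexp_mono (hσ : IsStrategy σ) (hd0 : ∀ q, 0 ≤ d0 q) (i : ℕ) (g h : Q → ℝ)
    (hgh : ∀ q, g q ≤ h q) : pexp M σ d0 i g ≤ pexp M σ d0 i h :=
  Finset.sum_le_sum fun qs _ => Finset.sum_le_sum fun as _ =>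
    mul_le_mul_of_nonneg_left (hgh _) (pathProb_nonneg M σ d0 hσ hd0 i qs as)

lemma pexp_nonneg (hσ : IsStrategy σ) (hd0 : ∀ q, 0 ≤ d0 q) (i : ℕ) (g : Q → ℝ)
    (hg : ∀ q, 0 ≤ g q) : 0 ≤ pexp M σ d0 i g :=
  Finset.sum_nonneg fun qs _ => Finset.sum_nonneg fun as _ =>
    mul_nonneg (pathProb_nonneg M σ d0 hσ hd0 i qs as) (hg _)

lemma pexp_succ_le (hσ : IsStrategy σ) (hd0 : ∀ q, 0 ≤ d0 q) (i : ℕ)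
    (f χ : Q → ℝ) (γ : ℝ)
    (hkey : ∀ q a, ∑ q', M.δ q a q' * f q' ≤ f q - γ * χ q) :
    pexp M σ d0 (i+1) f ≤ pexp M σ d0 i (fun q => f q - γ * χ q) := by
  rw [pexp_succ, pexp]
  refine Finset.sum_le_sum fun qs _ => Finset.sum_le_sum fun as _ => ?_
  refine mul_le_mul_of_nonneg_left ?_ (pathProb_nonneg M σ d0 hσ hd0 i qs as)
  set l := qs (Fin.last i) with hl
  set hst := List.ofFn (fun k : Fin i =>
    (qs ⟨k.val, k.isLt.trans (Nat.lt_succ_self i)⟩, as k)) with hhst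
  calc ∑ a, σ hst l a * ∑ q', M.δ l a q' * f q'
      ≤ ∑ a, σ hst l a * (f l - γ * χ l) :=
        Finset.sum_le_sum fun a _ =>
          mul_le_mul_of_nonneg_left (hkey l a) (hσ.1 _ _ _)
    _ = f l - γ * χ l := by rw [← Finset.sum_mul, hσ.2, one_mul]

end Path

end MDPAux

open MDP in
/-- For every strategy, the probability mass in the union of all
end-components tends to `1`: `liminf_i M^σ_i(E) = 1`. -/
theorem stmt10 {Q A : Type} [Fintype Q] [Fintype A] (M : MDP Q A)
    (d0 : Q → ℝ) (hd0 : IsDist d0) (σ : List (Q × A) → Q → A → ℝ)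
    (hσ : IsStrategy σ) :
    Filter.liminf (fun i : ℕ => mass (M.stepDist σ d0 i) M.ECUnion)
      Filter.atTop = 1 := by
  classical
  have hQ : Nonempty Q := by
    by_contra h
    rw [not_nonempty_iff] at h
    have := hd0.2
    rw [Finset.univ_eq_empty, Finset.sum_empty] at this
    norm_num at this
  have hA : Nonempty A := by
    by_contra h
    rw [not_nonempty_iff] at h
    have := hσ.2 [] (Classical.arbitrary Q)
    rw [Finset.univ_eq_empty, Finset.sum_empty] at this
    norm_num at this
  set χX : Q → ℝ := fun q => if q ∈ M.ECUnion then 0 else 1 with hχX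
  set u : ℕ → ℝ := fun i => MDPAux.pexp M σ d0 i χX with hu
  have hχXnn : ∀ q, 0 ≤ χX q := by
    intro q; rw [hχX]; dsimp only; split <;> norm_num
  -- the probability outside the union of end-components tends to 0
  have htend : Filter.Tendsto u Filter.atTop (nhds 0) := by
    by_cases hEC : ∀ q : Q, q ∈ M.ECUnion
    · have : ∀ i, u i = 0 := by
        intro i
        have hz : χX = fun _ => (0 : ℝ) := by
          funext q; rw [hχX]; simp [hEC q]
        rw [hu]
        dsimp only
        rw [hz]
        simp [MDPAux.pexp]
      simpa [funext this] using tendsto_const_nhds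
    · push_neg at hEC
      obtain ⟨x₀, hx₀⟩ := hEC
      set Xf : Finset Q := Finset.univ.filter (fun q => q ∉ M.ECUnion) with hXf
      have hXfne : Xf.Nonempty := ⟨x₀, by simp [hXf, hx₀]⟩
      set f : Q → ℝ := fun q => ∑ x ∈ Xf, MDPAux.rval M x q with hf
      set γ : ℝ := Xf.inf' hXfne (fun x => Finset.univ.inf' Finset.univ_nonempty
        (fun a => 1 - ∑ q', M.δ x a q' * MDPAux.rval M x q')) with hγ
      have hγpos : 0 < γ := by
        rw [hγ, Finset.lt_inf'_iff]
        intro x hx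
        rw [Finset.lt_inf'_iff]
        intro a _
        have hxX : x ∉ M.ECUnion := by
          rw [hXf] at hx; simpa using hx
        have := MDPAux.key_lt M x hxX a
        linarith
      have hγle : ∀ x ∈ Xf, ∀ a : A,
          ∑ q', M.δ x a q' * MDPAux.rval M x q' ≤ 1 - γ := by
        intro x hx a
        have h1 : γ ≤ Finset.univ.inf' Finset.univ_nonempty
            (fun a => 1 - ∑ q', M.δ x a q' * MDPAux.rval M x q') := by
          rw [hγ]
          exact Finset.inf'_le _ hx
        have h2 : Finset.univ.inf' Finset.univ_nonempty
            (fun a => 1 - ∑ q', M.δ x a q' * MDPAux.rval M x q')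
            ≤ 1 - ∑ q', M.δ x a q' * MDPAux.rval M x q' :=
          Finset.inf'_le _ (Finset.mem_univ a)
        linarith
      have hkey : ∀ q a, ∑ q', M.δ q a q' * f q' ≤ f q - γ * χX q := by
        intro q a
        have hswap : ∑ q', M.δ q a q' * f q'
            = ∑ x ∈ Xf, ∑ q', M.δ q a q' * MDPAux.rval M x q' := by
          rw [hf]
          dsimp only
          simp only [Finset.mul_sum]
          rw [Finset.sum_comm]
        rw [hswap]
        by_cases hq : q ∈ M.ECUnion
        · have hχ : χX q = 0 := by rw [hχX]; simp [hq]
          rw [hχ, mul_zero, sub_zero, hf]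
          refine Finset.sum_le_sum fun x hx => ?_
          have hxX : x ∉ M.ECUnion := by rw [hXf] at hx; simpa using hx
          have hqx : q ≠ x := fun h => hxX (h ▸ hq)
          exact MDPAux.sum_rval_le M x q hqx a
        · have hχ : χX q = 1 := by rw [hχX]; simp [hq]
          have hqXf : q ∈ Xf := by simp [hXf, hq]
          rw [hχ, mul_one]
          have e1 : ∑ x ∈ Xf, ∑ q', M.δ q a q' * MDPAux.rval M x q'
              = (∑ x ∈ Xf.erase q, ∑ q', M.δ q a q' * MDPAux.rval M x q')
                + ∑ q', M.δ q a q' * MDPAux.rval M q q' :=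
            (Finset.sum_erase_add Xf _ hqXf).symm
          have e2 : f q = (∑ x ∈ Xf.erase q, MDPAux.rval M x q) + MDPAux.rval M q q := by
            rw [hf]
            exact (Finset.sum_erase_add Xf _ hqXf).symm
          rw [e1, e2]
          have h3 : ∑ x ∈ Xf.erase q, ∑ q', M.δ q a q' * MDPAux.rval M x q'
              ≤ ∑ x ∈ Xf.erase q, MDPAux.rval M x q := by
            refine Finset.sum_le_sum fun x hx => ?_
            have hqx : q ≠ x := fun h => (Finset.mem_erase.mp hx).1 h.symm
            exact MDPAux.sum_rval_le M x q hqx a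
          have h4 : ∑ q', M.δ q a q' * MDPAux.rval M q q' ≤ 1 - γ := hγle q hqXf a
          have h5 : MDPAux.rval M q q = 1 := MDPAux.rval_x M q
          linarith
      set F : ℕ → ℝ := fun i => MDPAux.pexp M σ d0 i f with hF
      have hstep : ∀ i, γ * u i ≤ F i - F (i+1) := by
        intro i
        have h1 : F (i+1) ≤ MDPAux.pexp M σ d0 i (fun q => f q - γ * χX q) :=
          MDPAux.pexp_succ_le M σ d0 hσ hd0.1 i f χX γ hkey
        have h2 : MDPAux.pexp M σ d0 i (fun q => f q - γ * χX q)
            = F i - γ * u i := MDPAux.pexp_sub_smul M σ d0 i f χX γ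
        rw [h2] at h1
        linarith
      have hfnn : ∀ q, 0 ≤ f q := by
        intro q
        exact Finset.sum_nonneg fun x _ => MDPAux.rval_nonneg M x q
      have hFnn : ∀ i, 0 ≤ F i := fun i =>
        MDPAux.pexp_nonneg M σ d0 hσ hd0.1 i f hfnn
      set C : ℝ := (Xf.card : ℝ) with hC
      have hfC : ∀ q, f q ≤ C := by
        intro q
        rw [hf, hC]
        calc ∑ x ∈ Xf, MDPAux.rval M x q ≤ ∑ _x ∈ Xf, (1:ℝ) :=
              Finset.sum_le_sum fun x _ => MDPAux.rval_le_one M x q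
          _ = Xf.card := by simp
      have hF0 : F 0 ≤ C := by
        rw [hF]
        dsimp only
        rw [MDPAux.pexp_zero]
        calc ∑ q, d0 q * f q ≤ ∑ q, d0 q * C :=
              Finset.sum_le_sum fun q _ =>
                mul_le_mul_of_nonneg_left (hfC q) (hd0.1 q)
          _ = C := by rw [← Finset.sum_mul, hd0.2, one_mul]
      have htel : ∀ N, γ * ∑ i ∈ Finset.range N, u i ≤ F 0 - F N := by
        intro N
        induction N with
        | zero => simp
        | succ N ih =>
          rw [Finset.sum_range_succ, mul_add]
          have := hstep N
          linarith
      have hpartial : ∀ N, ∑ i ∈ Finset.range N, u i ≤ C / γ := by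
        intro N
        rw [le_div_iff₀ hγpos]
        have h1 := htel N
        have h2 := hFnn N
        have h3 := hF0
        nlinarith [mul_comm (∑ i ∈ Finset.range N, u i) γ]
      have hunn : ∀ i, 0 ≤ u i := fun i =>
        MDPAux.pexp_nonneg M σ d0 hσ hd0.1 i χX hχXnn
      have hsum : Summable u := summable_of_sum_range_le hunn hpartial
      exact hsum.tendsto_atTop_zero
  have hs : ∀ i, mass (M.stepDist σ d0 i) M.ECUnion = 1 - u i := by
    intro i
    rw [MDPAux.mass_eq_pexp]
    have hfun : (fun q => if q ∈ M.ECUnion then (1:ℝ) else 0)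
        = fun q => (fun _ => (1:ℝ)) q - 1 * χX q := by
      funext q
      rw [hχX]
      dsimp only
      split <;> norm_num
    rw [hfun, MDPAux.pexp_sub_smul, MDPAux.pexp_one M σ d0 hσ hd0.2, one_mul]
  have hten : Filter.Tendsto (fun i : ℕ => mass (M.stepDist σ d0 i) M.ECUnion)
      Filter.atTop (nhds 1) := by
    have : Filter.Tendsto (fun i : ℕ => 1 - u i) Filter.atTop (nhds (1 - 0)) :=
      Filter.Tendsto.sub tendsto_const_nhds htend
    rw [sub_zero] at this
    exact (funext hs : _) ▸ this
  exact hten.liminf_eq
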